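/- Let G be a signed graph on n vertices and m edges with a fixed sign function ε, and let k be a prime power. If the signed chromatic number χ(G, ε) ≤ k and m ≤ (k−1)n, then the number of k-colorings of (G, ε) satisfies P((G, ε), k) ≥ k^{n − m/(k−1)}. -/

import Mathlib

open MvPolynomial Finset

-- convexity: q^(1 - e/(q-1)) ≤ q - e for 0 ≤ e ≤ q-1
lemma pow_gap {q e : ℕ} (hq : 2 ≤ q) (he : e ≤ q - 1) :
    (q : ℝ) ^ ((1 : ℝ) - (e : ℝ) / ((q : ℝ) - 1)) ≤ (q : ℝ) - e := by
  have hq1 : (1 : ℝ) ≤ (q : ℝ) - 1 := by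
    have : (2 : ℝ) ≤ q := by exact_mod_cast hq
    linarith
  have hq1' : (0:ℝ) < (q:ℝ) - 1 := by linarith
  have heq : (e : ℝ) ≤ (q : ℝ) - 1 := by
    have : (e : ℝ) ≤ ((q - 1 : ℕ) : ℝ) := by exact_mod_cast he
    have h2 : ((q - 1 : ℕ) : ℝ) = (q : ℝ) - 1 := by
      have : 1 ≤ q := by omega
      push_cast [this]; ring
    linarith [h2 ▸ this]
  set w₁ : ℝ := 1 - (e : ℝ) / ((q : ℝ) - 1) with hw₁
  set w₂ : ℝ := (e : ℝ) / ((q : ℝ) - 1) with hw₂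
  have hw₂0 : 0 ≤ w₂ := div_nonneg (by positivity) (by linarith)
  have hw₁0 : 0 ≤ w₁ := by
    rw [hw₁, sub_nonneg, div_le_one hq1']; exact heq
  have key := Real.geom_mean_le_arith_mean2_weighted hw₁0 hw₂0
    (by positivity : (0:ℝ) ≤ (q:ℝ)) (zero_le_one) (by rw [hw₁, hw₂]; ring)
  calc (q : ℝ) ^ w₁ = (q:ℝ) ^ w₁ * (1:ℝ) ^ w₂ := by rw [Real.one_rpow, mul_one]
    _ ≤ w₁ * q + w₂ * 1 := key
    _ = (q : ℝ) - e := by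
        rw [hw₁, hw₂]; field_simp; ring

lemma rm_bound {F : Type} [Field F] [Fintype F] [DecidableEq F] {q : ℕ}
    (hq : Fintype.card F = q) :
    ∀ (n : ℕ) (P : MvPolynomial (Fin n) F), P ≠ 0 → (∀ i, P.degreeOf i ≤ q - 1) →
    ∀ D : ℕ, P.totalDegree ≤ D →
    (q : ℝ) ^ ((n : ℝ) - (D : ℝ) / ((q : ℝ) - 1)) ≤
      ((Finset.univ.filter (fun x : Fin n → F => eval x P ≠ 0)).card : ℝ) := by
  have hq2 : 2 ≤ q := hq ▸ Fintype.one_lt_card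
  have hq0 : (0:ℝ) < q := by positivity
  intro n
  induction n with
  | zero =>
    intro P hP hdeg D hD
    obtain ⟨c, rfl⟩ := MvPolynomial.C_surjective (Fin 0) P
    have hc : c ≠ 0 := fun h => hP (by rw [h, map_zero])
    have : (Finset.univ.filter (fun x : Fin 0 → F => eval x (C c) ≠ 0)) = Finset.univ := by
      ext x; simp [hc]
    rw [this]
    have h1 : (Finset.univ : Finset (Fin 0 → F)).card = 1 := by simp
    rw [h1]
    push_cast
    apply Real.rpow_le_one_of_one_le_of_nonpos
    · exact_mod_cast (by omega : 1 ≤ q)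
    · have : (0:ℝ) ≤ (D : ℝ) / ((q:ℝ) - 1) := by
        apply div_nonneg (by positivity); have : (2:ℝ) ≤ q := by exact_mod_cast hq2
        linarith
      simpa using this
  | succ n ih =>
    intro P hP hdeg D hD
    set Pu := finSuccEquiv F n P with hPu
    have hPu0 : Pu ≠ 0 := fun h => hP (by
      have := (finSuccEquiv F n).injective (h.trans (map_zero _).symm); exact this)
    set e := Pu.natDegree with he
    set Pe := Pu.coeff e with hPe
    have hPe0 : Pe ≠ 0 := Polynomial.coeff_ne_zero_of_eq_degree (Polynomial.degree_eq_natDegree hPu0)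
    have hee : e = P.degreeOf 0 := by rw [he, natDegree_finSuccEquiv]
    have heq1 : e ≤ q - 1 := hee ▸ hdeg 0
    have heD : e ≤ D := le_trans (hee ▸ degreeOf_le_totalDegree P 0) hD
    have hdegPe : ∀ j, Pe.degreeOf j ≤ q - 1 := fun j =>
      le_trans (degreeOf_coeff_finSuccEquiv P j e) (hdeg j.succ)
    have htdPe : Pe.totalDegree ≤ D - e := by
      have h2 := totalDegree_coeff_finSuccEquiv_add_le P e hPe0
      rw [← hPu, ← hPe] at h2
      omega
    have IH := ih Pe hPe0 hdegPe (D - e) htdPe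
    set S' := Finset.univ.filter (fun s : Fin n → F => eval s Pe ≠ 0) with hS'
    -- fiberwise counting
    set A := Finset.univ.filter (fun x : Fin (n+1) → F => eval x P ≠ 0) with hA
    have fiber : ∀ s ∈ S', (q - e : ℕ) ≤ (A.filter (fun x => Fin.tail x = s)).card := by
      intro s hs
      have hsPe : eval s Pe ≠ 0 := by simpa [hS'] using hs
      set qs : Polynomial F := Polynomial.map (eval s) Pu with hqs
      have hqsc : qs.coeff e ≠ 0 := by
        rw [hqs, Polynomial.coeff_map]; exact hsPe
      have hqs0 : qs ≠ 0 := fun h => hqsc (by rw [h, Polynomial.coeff_zero])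
      have hqsd : qs.natDegree ≤ e := Polynomial.natDegree_map_le
      -- zeros of qs
      have hz : (Finset.univ.filter (fun y : F => qs.eval y = 0)).card ≤ e := by
        calc (Finset.univ.filter (fun y : F => qs.eval y = 0)).card
            ≤ qs.roots.toFinset.card := by
              apply Finset.card_le_card
              intro y hy
              simp only [Finset.mem_filter] at hy
              rw [Multiset.mem_toFinset, Polynomial.mem_roots']
              exact ⟨hqs0, hy.2⟩
          _ ≤ Multiset.card qs.roots := Multiset.toFinset_card_le _
          _ ≤ qs.natDegree := Polynomial.card_roots' qs
          _ ≤ e := hqsd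
      have hnz : (q - e : ℕ) ≤ (Finset.univ.filter (fun y : F => qs.eval y ≠ 0)).card := by
        have h3 := Finset.card_filter_add_card_filter_not
          (s := (Finset.univ : Finset F)) (p := fun y => qs.eval y = 0)
        simp only [Finset.card_univ, hq] at h3
        simp only [ne_eq]
        omega
      -- inject y ↦ cons y s
      calc (q - e : ℕ) ≤ (Finset.univ.filter (fun y : F => qs.eval y ≠ 0)).card := hnz
        _ ≤ (A.filter (fun x => Fin.tail x = s)).card := by
            apply Finset.card_le_card_of_injOn (fun y : F => (Fin.cons y s : Fin (n+1) → F))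
            · intro y hy
              simp only [Finset.mem_coe, Finset.mem_filter, Finset.mem_univ, true_and] at hy ⊢
              constructor
              · simp only [hA, Finset.mem_filter, Finset.mem_univ, true_and]
                rw [eval_eq_eval_mv_eval']
                exact hy
              · funext i; simp [Fin.tail]
            · intro y1 _ y2 _ hcons
              have := congrArg (fun f => f 0) hcons
              simpa using this
      -- done fiber
    have count : ((q - e : ℕ) * S'.card : ℕ) ≤ A.card := by
      have hcover : A.card = ∑ s : Fin n → F, (A.filter (fun x => Fin.tail x = s)).card := by
        apply Finset.card_eq_sum_card_fiberwise
        intro x _; exact Finset.mem_univ _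
      rw [hcover]
      calc (q - e) * S'.card = ∑ s ∈ S', (q - e) := by rw [Finset.sum_const, smul_eq_mul, mul_comm]
        _ ≤ ∑ s ∈ S', (A.filter (fun x => Fin.tail x = s)).card := Finset.sum_le_sum fiber
        _ ≤ ∑ s : Fin n → F, (A.filter (fun x => Fin.tail x = s)).card := by
            apply Finset.sum_le_sum_of_subset (Finset.subset_univ _)
    -- numeric assembly
    have hqe : ((q - e : ℕ) : ℝ) = (q : ℝ) - e := by
      have heq' : e ≤ q := by omega
      rw [Nat.cast_sub heq']
    have hDe : ((D - e : ℕ) : ℝ) = (D : ℝ) - e := by rw [Nat.cast_sub heD]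
    have key : (q:ℝ) ^ (((n:ℝ)+1) - (D:ℝ)/((q:ℝ)-1)) ≤ ((q-e:ℕ):ℝ) * (S'.card : ℝ) := by
      have split : ((n:ℝ)+1) - (D:ℝ)/((q:ℝ)-1)
          = ((1:ℝ) - (e:ℝ)/((q:ℝ)-1)) + ((n:ℝ) - ((D:ℝ)-(e:ℝ))/((q:ℝ)-1)) := by
        ring
      rw [split, Real.rpow_add hq0]
      apply mul_le_mul (pow_gap hq2 heq1 |>.trans_eq hqe.symm)
        (by rw [← hDe]; exact IH)
        (Real.rpow_nonneg (le_of_lt hq0) _)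
        (by positivity)
    have hcast : ((n+1:ℕ):ℝ) = (n:ℝ)+1 := by push_cast; ring
    calc (q:ℝ) ^ (((n+1:ℕ):ℝ) - (D:ℝ)/((q:ℝ)-1))
        = (q:ℝ) ^ (((n:ℝ)+1) - (D:ℝ)/((q:ℝ)-1)) := by rw [hcast]
      _ ≤ ((q-e:ℕ):ℝ) * (S'.card : ℝ) := key
      _ ≤ (A.card : ℝ) := by exact_mod_cast count


open MvPolynomial Finset

def rho (q : ℕ) : ℕ → ℕ := fun e => if e = 0 then 0 else (e - 1) % (q - 1) + 1

lemma rho_zero (q : ℕ) : rho q 0 = 0 := by simp [rho]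

lemma rho_le_self (q e : ℕ) : rho q e ≤ e := by
  unfold rho
  split
  · omega
  · have := Nat.mod_le (e - 1) (q - 1); omega

lemma rho_le (q e : ℕ) (hq : 2 ≤ q) : rho q e ≤ q - 1 := by
  unfold rho
  split
  · omega
  · have : (e - 1) % (q - 1) < q - 1 := Nat.mod_lt _ (by omega)
    omega

lemma pow_rho {F : Type} [Field F] [Fintype F] {q : ℕ} (hq : Fintype.card F = q)
    (hq2 : 2 ≤ q) (x : F) (e : ℕ) : x ^ e = x ^ rho q e := by
  rcases eq_or_ne e 0 with rfl | he
  · rw [rho_zero]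
  · unfold rho
    rw [if_neg he]
    rcases eq_or_ne x 0 with rfl | hx
    · rw [zero_pow he, zero_pow (by omega)]
    · have h1 : x ^ (q - 1) = 1 := by
        have := FiniteField.pow_card_sub_one_eq_one x hx
        rwa [hq] at this
      have hdm := Nat.div_add_mod (e - 1) (q - 1)
      have he1 : e = ((q-1) * ((e-1)/(q-1)) + (e-1) % (q-1)) + 1 := by omega
      conv_lhs => rw [he1]
      rw [pow_add, pow_add, pow_mul, h1, one_pow, one_mul]
      ring

noncomputable def reduceP {F : Type} [Field F] (q : ℕ) {n : ℕ}
    (P : MvPolynomial (Fin n) F) : MvPolynomial (Fin n) F :=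
  ∑ d ∈ P.support, monomial (d.mapRange (rho q) (rho_zero q)) (P.coeff d)

lemma eval_reduceP {F : Type} [Field F] [Fintype F] {q : ℕ} (hq : Fintype.card F = q)
    (hq2 : 2 ≤ q) {n : ℕ} (P : MvPolynomial (Fin n) F) (x : Fin n → F) :
    eval x (reduceP q P) = eval x P := by
  rw [reduceP, map_sum, eval_eq']
  apply Finset.sum_congr rfl
  intro d _
  rw [eval_monomial, Finsupp.prod_fintype]
  · congr 1
    apply Finset.prod_congr rfl
    intro i _
    rw [Finsupp.mapRange_apply]
    exact (pow_rho hq hq2 (x i) (d i)).symm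
  · intro i; exact pow_zero _

lemma td_reduceP {F : Type} [Field F] (q : ℕ) {n : ℕ} (P : MvPolynomial (Fin n) F) :
    (reduceP q P).totalDegree ≤ P.totalDegree := by
  refine (totalDegree_finset_sum _ _).trans (Finset.sup_le fun d hd => ?_)
  refine (totalDegree_monomial_le _ _).trans ?_
  have h1 : (d.mapRange (rho q) (rho_zero q)).sum (fun _ e => e) ≤ d.sum (fun _ e => e) := by
    rw [Finsupp.sum, Finsupp.sum]
    calc ∑ i ∈ (d.mapRange (rho q) (rho_zero q)).support, (d.mapRange (rho q) (rho_zero q)) i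
        ≤ ∑ i ∈ d.support, (d.mapRange (rho q) (rho_zero q)) i := by
          apply Finset.sum_le_sum_of_subset Finsupp.support_mapRange
      _ ≤ ∑ i ∈ d.support, d i := by
          apply Finset.sum_le_sum
          intro i _
          rw [Finsupp.mapRange_apply]
          exact rho_le_self q (d i)
  exact h1.trans (le_totalDegree hd)

lemma degOf_reduceP {F : Type} [Field F] (q : ℕ) (hq2 : 2 ≤ q) {n : ℕ}
    (P : MvPolynomial (Fin n) F) (i : Fin n) : (reduceP q P).degreeOf i ≤ q - 1 := by
  classical
  rw [degreeOf_le_iff]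
  intro d hd
  rw [reduceP] at hd
  have h1 := MvPolynomial.support_sum hd
  simp only [Finset.mem_biUnion] at h1
  obtain ⟨d₀, _, hm⟩ := h1
  rw [support_monomial] at hm
  split at hm
  · exact absurd hm (by simp)
  · rw [Finset.mem_singleton] at hm
    subst hm
    rw [Finsupp.mapRange_apply]
    exact rho_le q (d₀ i) hq2


open Finset

section Equivariant
variable {α β : Type} [Fintype α] [Fintype β] [DecidableEq α] [DecidableEq β]

lemma equivariant_bij (i : α → α) (j : β → β) (hi : ∀ a, i (i a) = a) (hj : ∀ b, j (j b) = b)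
    (hcard : Fintype.card α = Fintype.card β)
    (hfix : (Finset.univ.filter (fun a => i a = a)).card
          = (Finset.univ.filter (fun b => j b = b)).card) :
    ∃ e : α → β, Function.Bijective e ∧ ∀ a, e (i a) = j (e a) := by
  set rA : α → ℕ := fun a => ((Fintype.equivFin α) a : ℕ) with hrA
  set rB : β → ℕ := fun b => ((Fintype.equivFin β) b : ℕ) with hrB
  have rAinj : Function.Injective rA := fun a b h =>
    (Fintype.equivFin α).injective (Fin.val_injective h)
  have rBinj : Function.Injective rB := fun a b h =>
    (Fintype.equivFin β).injective (Fin.val_injective h)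
  set fixA : α → Prop := fun a => i a = a with hfixA
  set loA : α → Prop := fun a => ¬ i a = a ∧ rA a < rA (i a) with hloA
  set hiA : α → Prop := fun a => ¬ i a = a ∧ rA (i a) < rA a with hhiA
  set fixB : β → Prop := fun b => j b = b with hfixB
  set loB : β → Prop := fun b => ¬ j b = b ∧ rB b < rB (j b) with hloB
  set hiB : β → Prop := fun b => ¬ j b = b ∧ rB (j b) < rB b with hhiB
  -- trichotomy facts
  have triA : ∀ a, ¬ i a = a → (loA a ↔ ¬ hiA a) := by
    intro a ha
    have hne : rA a ≠ rA (i a) := fun h => ha (rAinj h).symm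
    constructor
    · rintro ⟨-, h1⟩ ⟨-, h2⟩; omega
    · intro h; refine ⟨ha, ?_⟩
      by_contra h2
      exact h ⟨ha, by omega⟩
  -- counting: card α = #fixA + #loA + #hiA
  have splitA : Fintype.card α =
      (univ.filter fixA).card + ((univ.filter loA).card + (univ.filter hiA).card) := by
    have h1 : (univ.filter fixA).card + (univ.filter (fun a => ¬ fixA a)).card
        = Fintype.card α := by
      rw [← Finset.card_univ]; exact Finset.card_filter_add_card_filter_not _
    have h2 : (univ.filter loA).card + (univ.filter hiA).card
        = (univ.filter (fun a => ¬ fixA a)).card := by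
      have e1 : univ.filter loA = (univ.filter (fun a => ¬ fixA a)).filter
          (fun a => rA a < rA (i a)) := by
        rw [Finset.filter_filter]
      have e2 : univ.filter hiA = (univ.filter (fun a => ¬ fixA a)).filter
          (fun a => ¬ rA a < rA (i a)) := by
        rw [Finset.filter_filter]
        apply Finset.filter_congr
        intro a _
        simp only [hhiA, hfixA]
        constructor
        · rintro ⟨h1', h2'⟩; exact ⟨h1', by omega⟩
        · rintro ⟨h1', h2'⟩
          have hne : rA a ≠ rA (i a) := fun h => h1' (rAinj h).symm
          exact ⟨h1', by omega⟩
      rw [e1, e2]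
      exact Finset.card_filter_add_card_filter_not _
    omega
  have splitB : Fintype.card β =
      (univ.filter fixB).card + ((univ.filter loB).card + (univ.filter hiB).card) := by
    have h1 : (univ.filter fixB).card + (univ.filter (fun b => ¬ fixB b)).card
        = Fintype.card β := by
      rw [← Finset.card_univ]; exact Finset.card_filter_add_card_filter_not _
    have h2 : (univ.filter loB).card + (univ.filter hiB).card
        = (univ.filter (fun b => ¬ fixB b)).card := by
      have e1 : univ.filter loB = (univ.filter (fun b => ¬ fixB b)).filter
          (fun b => rB b < rB (j b)) := by
        rw [Finset.filter_filter]
      have e2 : univ.filter hiB = (univ.filter (fun b => ¬ fixB b)).filter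
          (fun b => ¬ rB b < rB (j b)) := by
        rw [Finset.filter_filter]
        apply Finset.filter_congr
        intro b _
        simp only [hhiB, hfixB]
        constructor
        · rintro ⟨h1', h2'⟩; exact ⟨h1', by omega⟩
        · rintro ⟨h1', h2'⟩
          have hne : rB b ≠ rB (j b) := fun h => h1' (rBinj h).symm
          exact ⟨h1', by omega⟩
      rw [e1, e2]
      exact Finset.card_filter_add_card_filter_not _
    omega
  have lohiA : (univ.filter loA).card = (univ.filter hiA).card := by
    apply Finset.card_bij' (fun a _ => i a) (fun a _ => i a)
    · intro a ha
      simp only [Finset.mem_filter, Finset.mem_univ, true_and, hloA] at ha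
      simp only [Finset.mem_filter, Finset.mem_univ, true_and, hhiA]
      rw [hi]
      exact ⟨fun h => ha.1 h.symm, ha.2⟩
    · intro a ha
      simp only [Finset.mem_filter, Finset.mem_univ, true_and, hhiA] at ha
      simp only [Finset.mem_filter, Finset.mem_univ, true_and, hloA]
      rw [hi]
      exact ⟨fun h => ha.1 h.symm, ha.2⟩
    · intro a _; exact hi a
    · intro a _; exact hi a
  have lohiB : (univ.filter loB).card = (univ.filter hiB).card := by
    apply Finset.card_bij' (fun b _ => j b) (fun b _ => j b)
    · intro b hb
      simp only [Finset.mem_filter, Finset.mem_univ, true_and, hloB] at hb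
      simp only [Finset.mem_filter, Finset.mem_univ, true_and, hhiB]
      rw [hj]
      exact ⟨fun h => hb.1 h.symm, hb.2⟩
    · intro b hb
      simp only [Finset.mem_filter, Finset.mem_univ, true_and, hhiB] at hb
      simp only [Finset.mem_filter, Finset.mem_univ, true_and, hloB]
      rw [hj]
      exact ⟨fun h => hb.1 h.symm, hb.2⟩
    · intro b _; exact hj b
    · intro b _; exact hj b
  have hfix2 : (univ.filter fixA).card = (univ.filter fixB).card := by
    convert hfix using 3
  have hLo : (univ.filter loA).card = (univ.filter loB).card := by omega
  -- build subtype equivs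
  have cF : Fintype.card {a // fixA a} = Fintype.card {b // fixB b} := by
    rw [Fintype.card_subtype, Fintype.card_subtype]; exact hfix
  have cL : Fintype.card {a // loA a} = Fintype.card {b // loB b} := by
    rw [Fintype.card_subtype, Fintype.card_subtype]; exact hLo
  set eF := Fintype.equivOfCardEq cF with heF
  set eL := Fintype.equivOfCardEq cL with heL
  -- fixB preserved by eF etc: these come from subtype
  -- properties of lo images under j
  have jlo_hi : ∀ b, loB b → hiB (j b) := by
    rintro b ⟨h1, h2⟩
    constructor
    · intro h
      rw [hj] at h
      exact h1 h.symm
    · rw [hj]; exact h2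
  -- define e
    -- helper: membership proofs
  have memHiLo : ∀ a, ¬ fixA a → ¬ loA a → loA (i a) := by
    intro a h1 h2
    have h3 : hiA a := by
      by_contra h4
      exact h2 ((triA a h1).mpr h4)
    constructor
    · intro h
      rw [hi] at h
      exact h1 h.symm
    · rw [hi]; exact h3.2
  classical
  set e : α → β := fun a =>
    if h : fixA a then (eF ⟨a, h⟩ : β)
    else if h2 : loA a then (eL ⟨a, h2⟩ : β)
    else j (eL ⟨i a, memHiLo a h h2⟩) with he
  -- class of image
  have imgFix : ∀ a (h : fixA a), e a = eF ⟨a, h⟩ ∧ fixB (e a) := by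
    intro a h
    have : e a = eF ⟨a, h⟩ := by simp only [he]; rw [dif_pos h]
    exact ⟨this, this ▸ (eF ⟨a, h⟩).2⟩
  have imgLo : ∀ a (h : ¬ fixA a) (h2 : loA a), e a = eL ⟨a, h2⟩ ∧ loB (e a) := by
    intro a h h2
    have : e a = eL ⟨a, h2⟩ := by simp only [he]; rw [dif_neg h, dif_pos h2]
    exact ⟨this, this ▸ (eL ⟨a, h2⟩).2⟩
  have imgHi : ∀ a (h : ¬ fixA a) (h2 : ¬ loA a),
      e a = j (eL ⟨i a, memHiLo a h h2⟩) ∧ hiB (e a) := by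
    intro a h h2
    have : e a = j (eL ⟨i a, memHiLo a h h2⟩) := by simp only [he]; rw [dif_neg h, dif_neg h2]
    exact ⟨this, this ▸ jlo_hi _ (eL ⟨i a, memHiLo a h h2⟩).2⟩
  have classEx : ∀ b, (fixB b → ¬ loB b ∧ ¬ hiB b) ∧ (loB b → ¬ hiB b) := by
    intro b
    constructor
    · intro h; exact ⟨fun h2 => h2.1 h, fun h2 => h2.1 h⟩
    · rintro ⟨h1, h2⟩ ⟨h3, h4⟩; omega
  -- injectivity
  have einj : Function.Injective e := by
    intro a1 a2 heq
    by_cases f1 : fixA a1 <;> by_cases f2 : fixA a2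
    · obtain ⟨he1, -⟩ := imgFix a1 f1
      obtain ⟨he2, -⟩ := imgFix a2 f2
      rw [he1, he2] at heq
      exact congrArg Subtype.val (eF.injective (Subtype.ext heq))
    · by_cases l2 : loA a2
      · obtain ⟨-, hc1⟩ := imgFix a1 f1; obtain ⟨-, hc2⟩ := imgLo a2 f2 l2
        exact absurd hc2 (heq ▸ ((classEx (e a1)).1 hc1).1)
      · obtain ⟨-, hc1⟩ := imgFix a1 f1; obtain ⟨-, hc2⟩ := imgHi a2 f2 l2
        exact absurd hc2 (heq ▸ ((classEx (e a1)).1 hc1).2)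
    · by_cases l1 : loA a1
      · obtain ⟨-, hc1⟩ := imgLo a1 f1 l1; obtain ⟨-, hc2⟩ := imgFix a2 f2
        exact absurd hc1 (heq ▸ ((classEx (e a2)).1 hc2).1)
      · obtain ⟨-, hc1⟩ := imgHi a1 f1 l1; obtain ⟨-, hc2⟩ := imgFix a2 f2
        exact absurd hc1 (heq ▸ ((classEx (e a2)).1 hc2).2)
    · by_cases l1 : loA a1 <;> by_cases l2 : loA a2
      · obtain ⟨he1, -⟩ := imgLo a1 f1 l1
        obtain ⟨he2, -⟩ := imgLo a2 f2 l2
        rw [he1, he2] at heq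
        exact congrArg Subtype.val (eL.injective (Subtype.ext heq))
      · obtain ⟨-, hc1⟩ := imgLo a1 f1 l1; obtain ⟨-, hc2⟩ := imgHi a2 f2 l2
        exact absurd hc2 (heq ▸ (classEx (e a1)).2 hc1)
      · obtain ⟨-, hc1⟩ := imgHi a1 f1 l1; obtain ⟨-, hc2⟩ := imgLo a2 f2 l2
        exact absurd hc1 (heq ▸ (classEx (e a2)).2 hc2)
      · obtain ⟨he1, -⟩ := imgHi a1 f1 l1
        obtain ⟨he2, -⟩ := imgHi a2 f2 l2
        rw [he1, he2] at heq
        have hjinj : Function.Injective j := Function.LeftInverse.injective hj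
        have h5 := hjinj heq
        have h6 := eL.injective (Subtype.ext h5)
        have h7 : i a1 = i a2 := congrArg Subtype.val h6
        have h8 := congrArg i h7
        rwa [hi, hi] at h8
  refine ⟨e, ?_, ?_⟩
  · rw [Fintype.bijective_iff_injective_and_card]; exact ⟨einj, hcard⟩
  -- equivariance
  · intro a
    by_cases f1 : fixA a
    · have hfa : i a = a := f1
      obtain ⟨-, hc⟩ := imgFix a f1
      rw [hfa, hc]
    · by_cases l1 : loA a
      · -- a in Lo: i a in Hi
        have hfia : ¬ fixA (i a) := by
          intro h
          have h' : i (i a) = i a := h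
          rw [hi] at h'
          exact f1 h'.symm
        have hlia : ¬ loA (i a) := by
          rintro ⟨-, h2⟩
          rw [hi] at h2
          exact absurd l1.2 (by omega)
        obtain ⟨he2, -⟩ := imgHi (i a) hfia hlia
        obtain ⟨he1, -⟩ := imgLo a f1 l1
        have harg : (⟨i (i a), memHiLo (i a) hfia hlia⟩ : {x // loA x}) = ⟨a, l1⟩ :=
          Subtype.ext (hi a)
        rw [he2, he1, harg]
      · -- a in Hi: i a in Lo
        have hfia : ¬ fixA (i a) := by
          intro h
          have h' : i (i a) = i a := h
          rw [hi] at h'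
          exact f1 h'.symm
        have hlia : loA (i a) := memHiLo a f1 l1
        obtain ⟨he2, -⟩ := imgLo (i a) hfia hlia
        obtain ⟨he1, -⟩ := imgHi a f1 l1
        rw [he2, he1, hj]
end Equivariant

/-- The traditional color set for signed graphs: `M_{2t+1} = {0, ±1, …, ±t}` and
`M_{2t} = {±1, …, ±t}`. -/
def signedColorSet (k : ℕ) : Set ℤ :=
  {a : ℤ | a.natAbs ≤ k / 2 ∧ (k % 2 = 1 ∨ a ≠ 0)}

/-- For a signed graph `(G, ε)` with `χ(G,ε) ≤ k`, `k` a prime power and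
`m ≤ (k-1)n`, the number of `k`-colorings of `(G, ε)` is at least `k^(n - m/(k-1))`. -/
theorem stmt_11 {V : Type} [Fintype V] [DecidableEq V] (G : SimpleGraph V)
    [DecidableRel G.Adj]
    (ε : V → V → ℤ) (hsym : ∀ u v, ε u v = ε v u)
    (hval : ∀ u v, G.Adj u v → ε u v = 1 ∨ ε u v = -1)
    (n m k : ℕ) (hn : Fintype.card V = n) (hm : G.edgeFinset.card = m)
    (hpp : IsPrimePow k)
    (hχ : ∃ κ : V → ℤ, (∀ v, κ v ∈ signedColorSet k) ∧
      ∀ u v, G.Adj u v → κ v ≠ ε u v * κ u)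
    (hmn : (m : ℝ) ≤ ((k : ℝ) - 1) * n) :
    (k : ℝ) ^ ((n : ℝ) - (m : ℝ) / ((k : ℝ) - 1)) ≤
      (Nat.card {κ : V → ℤ // (∀ v, κ v ∈ signedColorSet k) ∧
        ∀ u v, G.Adj u v → κ v ≠ ε u v * κ u} : ℝ) := by
  classical
  have hk2 : 2 ≤ k := hpp.two_le
  obtain ⟨p, a, hp, ha, hpa⟩ := hpp
  haveI hpf : Fact p.Prime := ⟨Nat.prime_iff.mpr hp⟩
  haveI instF : Fintype (GaloisField p a) := Fintype.ofFinite _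
  set F := GaloisField p a with hF
  have hFq : Fintype.card F = k := by
    rw [← Nat.card_eq_fintype_card, hF, GaloisField.card p a (by omega : a ≠ 0), hpa]
  -- parity facts
  have hp2eq : k % 2 = 0 → p = 2 := by
    intro h
    have h2 : (2 : ℕ) ∣ p ^ a := by
      rw [hpa]; exact Nat.dvd_of_mod_eq_zero h
    have h3 : (2 : ℕ) ∣ p := Nat.Prime.dvd_of_dvd_pow Nat.prime_two h2
    exact ((Nat.prime_dvd_prime_iff_eq Nat.prime_two (Nat.prime_iff.mpr hp)).mp h3).symm
  have hpodd : k % 2 = 1 → p ≠ 2 := by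
    intro h hc
    have h2 : (2 : ℕ) ∣ k := by
      rw [← hpa, hc]; exact dvd_pow_self 2 (by omega)
    omega
  -- the finite color set
  set t : ℕ := k / 2 with ht
  set tz : ℤ := (t : ℤ) with htz
  set Mfin : Finset ℤ := (Finset.Icc (-tz) tz).filter (fun x => k % 2 = 1 ∨ x ≠ 0) with hMfin
  have hmemM : ∀ x : ℤ, x ∈ signedColorSet k ↔ x ∈ Mfin := by
    intro x
    simp only [signedColorSet, Set.mem_setOf_eq, hMfin, Finset.mem_filter, Finset.mem_Icc]
    constructor
    · rintro ⟨h1, h2⟩; exact ⟨by omega, h2⟩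
    · rintro ⟨h1, h2⟩; exact ⟨by omega, h2⟩
  have h0memIcc : (0 : ℤ) ∈ Finset.Icc (-tz) tz := by
    rw [Finset.mem_Icc]; omega
  have hIcc : (Finset.Icc (-tz) tz).card = 2 * t + 1 := by
    rw [Int.card_Icc]; omega
  have hcardM : Mfin.card = k := by
    rcases (by omega : k % 2 = 1 ∨ k % 2 = 0) with hk1 | hk0
    · have he : Mfin = Finset.Icc (-tz) tz :=
        Finset.filter_true_of_mem (fun x _ => Or.inl hk1)
      rw [he, hIcc]; omega
    · have he : Mfin = (Finset.Icc (-tz) tz).erase 0 := by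
        rw [hMfin, ← Finset.filter_ne']
        apply Finset.filter_congr
        intro x _
        simp [hk0]
      rw [he, Finset.card_erase_of_mem h0memIcc, hIcc]; omega
  -- involutions
  set MT := {x : ℤ // x ∈ Mfin} with hMT
  have memNeg : ∀ x : ℤ, x ∈ Mfin → -x ∈ Mfin := by
    intro x hx
    simp only [hMfin, Finset.mem_filter, Finset.mem_Icc] at hx ⊢
    obtain ⟨⟨h1, h2⟩, h3⟩ := hx
    refine ⟨⟨by omega, by omega⟩, ?_⟩
    rcases h3 with h | h
    · exact Or.inl h
    · exact Or.inr (by omega)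
  set iM : MT → MT := fun x => ⟨-x.1, memNeg x.1 x.2⟩ with hiMdef
  have hiM : ∀ x, iM (iM x) = x := fun x => Subtype.ext (neg_neg x.1)
  set cF : F := if k % 2 = 1 then 0 else 1 with hcF
  set jF : F → F := fun x => cF - x with hjF
  have hjFinv : ∀ x, jF (jF x) = x := fun x => by simp [hjF]
  -- characteristic facts
  have h2Fne : k % 2 = 1 → (2 : F) ≠ 0 := by
    intro hk1 h
    have hnd : ¬ (p ∣ 2) := by
      intro hd
      exact hpodd hk1 ((Nat.prime_dvd_prime_iff_eq (Nat.prime_iff.mpr hp) Nat.prime_two).mp hd)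
    have h2 : ((2 : ℕ) : F) = 0 := by exact_mod_cast h
    exact hnd ((CharP.cast_eq_zero_iff F p 2).mp h2)
  have h2F0 : k % 2 = 0 → (2 : F) = 0 := by
    intro hk0
    have hpc : ((p : ℕ) : F) = 0 := CharP.cast_eq_zero F p
    have h2 : ((2 : ℕ) : F) = 0 := by rw [← hp2eq hk0]; exact hpc
    exact_mod_cast h2
  -- fixed point counts
  have hfixM : (Finset.univ.filter (fun x : MT => iM x = x)).card
      = (if k % 2 = 1 then 1 else 0) := by
    rcases (by omega : k % 2 = 1 ∨ k % 2 = 0) with hk1 | hk0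
    · have h0M : (0 : ℤ) ∈ Mfin :=
        Finset.mem_filter.mpr ⟨h0memIcc, Or.inl hk1⟩
      have he : Finset.univ.filter (fun x : MT => iM x = x) = {⟨0, h0M⟩} := by
        ext x
        simp only [Finset.mem_filter, Finset.mem_univ, true_and, Finset.mem_singleton]
        constructor
        · intro hx
          have h1 : -x.1 = x.1 := congrArg Subtype.val hx
          exact Subtype.ext (show x.1 = (0:ℤ) by omega)
        · rintro rfl
          exact Subtype.ext (by simp [hiMdef])
      rw [he, if_pos hk1, Finset.card_singleton]
    · rw [if_neg (by omega), Finset.card_eq_zero, Finset.filter_eq_empty_iff]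
      intro x _
      intro hx
      obtain ⟨xv, hxv⟩ := x
      have h1 : -xv = xv := congrArg Subtype.val hx
      have hx0 : xv = 0 := by omega
      rw [hMfin, Finset.mem_filter] at hxv
      rcases hxv.2 with h | h
      · omega
      · exact h hx0
  have hfixF : (Finset.univ.filter (fun x : F => jF x = x)).card
      = (if k % 2 = 1 then 1 else 0) := by
    rcases (by omega : k % 2 = 1 ∨ k % 2 = 0) with hk1 | hk0
    · have hc0 : cF = 0 := if_pos hk1
      have he : Finset.univ.filter (fun x : F => jF x = x) = {0} := by
        ext x
        simp only [Finset.mem_filter, Finset.mem_univ, true_and, Finset.mem_singleton, hjF, hc0]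
        constructor
        · intro h
          have h2 : (2 : F) * x = 0 := by linear_combination -h
          rcases mul_eq_zero.mp h2 with h3 | h3
          · exact absurd h3 (h2Fne hk1)
          · exact h3
        · rintro rfl; simp
      rw [he, if_pos hk1, Finset.card_singleton]
    · have hc1 : cF = 1 := if_neg (by omega)
      rw [if_neg (by omega), Finset.card_eq_zero, Finset.filter_eq_empty_iff]
      intro x _
      intro hx
      have h1 : cF - x = x := hx
      rw [hc1] at h1
      have h2 : (1 : F) = 2 * x := by linear_combination h1
      rw [h2F0 hk0] at h2
      simp at h2
  -- the equivariant bijection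
  have hcardMT : Fintype.card MT = Fintype.card F := by
    have h := Fintype.card_coe Mfin
    rw [hcardM, ← hFq] at h
    exact h
  obtain ⟨eM, heMbij, heMeq⟩ := equivariant_bij iM jF hiM hjFinv hcardMT
    (by rw [hfixM, hfixF])
  set eqM : MT ≃ F := Equiv.ofBijective eM heMbij with heqM
  have heqMapp : ∀ x, eqM x = eM x := fun x => rfl
  -- colorings over F
  set PF : (V → F) → Prop := fun f => ∀ u v, G.Adj u v →
    f v ≠ (if ε u v = 1 then f u else cF - f u) with hPF
  have hforward : ∀ (κ : V → ℤ) (hmem : ∀ v, κ v ∈ signedColorSet k),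
      (∀ u v, G.Adj u v → κ v ≠ ε u v * κ u) →
      PF (fun v => eM ⟨κ v, (hmemM _).mp (hmem v)⟩) := by
    intro κ hmem hcol
    intro u v hadj hcontra
    beta_reduce at hcontra
    rcases hval u v hadj with hε | hε
    · rw [if_pos hε] at hcontra
      have h1 := heMbij.1 hcontra
      have h2 : κ v = κ u := congrArg Subtype.val h1
      exact hcol u v hadj (by rw [hε, one_mul]; exact h2)
    · rw [if_neg (by rw [hε]; norm_num)] at hcontra
      have h1 : eM ⟨κ v, (hmemM _).mp (hmem v)⟩ = eM (iM ⟨κ u, (hmemM _).mp (hmem u)⟩) := by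
        rw [heMeq, hcontra]
      have h2 := heMbij.1 h1
      have h3 : κ v = -(κ u) := congrArg Subtype.val h2
      exact hcol u v hadj (by rw [hε]; omega)
  have hcongT : Nat.card {κ : V → ℤ // (∀ v, κ v ∈ signedColorSet k) ∧
        ∀ u v, G.Adj u v → κ v ≠ ε u v * κ u} = Nat.card {f : V → F // PF f} := by
    apply Nat.card_congr
    refine Equiv.ofBijective
      (fun κ => ⟨fun v => eM ⟨κ.1 v, (hmemM _).mp (κ.2.1 v)⟩,
        hforward κ.1 κ.2.1 κ.2.2⟩) ⟨?_, ?_⟩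
    · intro κ1 κ2 hk
      have h1 := congrArg Subtype.val hk
      apply Subtype.ext
      funext v
      have h2 := congrFun h1 v
      have h3 := heMbij.1 h2
      exact congrArg Subtype.val h3
    · rintro ⟨f, hf⟩
      refine ⟨⟨fun v => (eqM.symm (f v)).1, ⟨fun v => (hmemM _).mpr (eqM.symm (f v)).2, ?_⟩⟩, ?_⟩
      · intro u v hadj heq
        beta_reduce at heq
        rcases hval u v hadj with hε | hε
        · rw [hε, one_mul] at heq
          have h1 : eqM.symm (f v) = eqM.symm (f u) := Subtype.ext heq
          have h2 : f v = f u := by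
            have := congrArg eqM h1
            rwa [Equiv.apply_symm_apply, Equiv.apply_symm_apply] at this
          exact hf u v hadj (by rw [if_pos hε]; exact h2)
        · rw [hε] at heq
          have h1 : eqM.symm (f v) = iM (eqM.symm (f u)) := Subtype.ext (by
            show (eqM.symm (f v)).1 = -(eqM.symm (f u)).1
            omega)
          have h2 : f v = eM (iM (eqM.symm (f u))) := by
            have := congrArg eqM h1
            rwa [Equiv.apply_symm_apply] at this
          rw [heMeq] at h2
          have h3 : (eM (eqM.symm (f u)) : F) = f u := Equiv.apply_symm_apply eqM (f u)
          rw [h3] at h2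
          exact hf u v hadj (by rw [if_neg (by rw [hε]; norm_num)]; exact h2)
      · apply Subtype.ext
        funext v
        show eM ⟨(eqM.symm (f v)).1, _⟩ = f v
        have h4 : (⟨(eqM.symm (f v)).1, (hmemM _).mp ((hmemM _).mpr (eqM.symm (f v)).2)⟩ : MT)
            = eqM.symm (f v) := Subtype.ext rfl
        rw [h4]
        exact Equiv.apply_symm_apply eqM (f v)
  -- polynomial setup
  set eV : V ≃ Fin n := Fintype.equivFinOfCardEq hn with heV
  set S : Finset (Fin n × Fin n) := Finset.univ.filter
    (fun pr => G.Adj (eV.symm pr.1) (eV.symm pr.2) ∧ pr.1 < pr.2) with hS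
  set fac : Fin n × Fin n → MvPolynomial (Fin n) F := fun pr =>
    MvPolynomial.X pr.2 - (if ε (eV.symm pr.1) (eV.symm pr.2) = 1 then MvPolynomial.X pr.1
      else MvPolynomial.C cF - MvPolynomial.X pr.1) with hfac
  set P : MvPolynomial (Fin n) F := ∏ pr ∈ S, fac pr with hP
  have hfac_eval : ∀ (x : Fin n → F) pr, MvPolynomial.eval x (fac pr) =
      x pr.2 - (if ε (eV.symm pr.1) (eV.symm pr.2) = 1 then x pr.1 else cF - x pr.1) := by
    intro x pr
    rcases eq_or_ne (ε (eV.symm pr.1) (eV.symm pr.2)) 1 with h | h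
    · simp only [hfac]
      rw [if_pos h, if_pos h]; simp
    · simp only [hfac]
      rw [if_neg h, if_neg h]; simp
  have hswap : ∀ (y z : F) (u v : V), G.Adj u v →
      (y ≠ if ε u v = 1 then z else cF - z) → (z ≠ if ε v u = 1 then y else cF - y) := by
    intro y z u v hadj hne heq2
    rcases hval u v hadj with h1 | h1
    · have h2 : ε v u = 1 := by rw [← hsym u v]; exact h1
      rw [if_pos h1] at hne
      rw [if_pos h2] at heq2
      exact hne heq2.symm
    · have h2 : ε v u = -1 := by rw [← hsym u v]; exact h1
      rw [if_neg (by rw [h1]; norm_num)] at hne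
      rw [if_neg (by rw [h2]; norm_num)] at heq2
      exact hne (by rw [heq2]; ring)
  have hiffP : ∀ x : Fin n → F, (MvPolynomial.eval x P ≠ 0) ↔ PF (fun v => x (eV v)) := by
    intro x
    rw [hP, map_prod, Finset.prod_ne_zero_iff]
    constructor
    · intro h u v hadj
      rcases lt_trichotomy (eV u) (eV v) with hlt | heq | hgt
      · have hmem : (eV u, eV v) ∈ S := by
          simp only [hS, Finset.mem_filter, Finset.mem_univ, true_and]
          exact ⟨by simpa using hadj, hlt⟩
        have h2 := h _ hmem
        rw [hfac_eval, sub_ne_zero] at h2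
        simpa using h2
      · exact absurd (eV.injective heq) hadj.ne
      · have hmem : (eV v, eV u) ∈ S := by
          simp only [hS, Finset.mem_filter, Finset.mem_univ, true_and]
          exact ⟨by simpa using hadj.symm, hgt⟩
        have h2 := h _ hmem
        rw [hfac_eval, sub_ne_zero] at h2
        simp only [Equiv.symm_apply_apply] at h2
        exact hswap _ _ v u hadj.symm h2
    · intro h pr hpr
      simp only [hS, Finset.mem_filter, Finset.mem_univ, true_and] at hpr
      rw [hfac_eval, sub_ne_zero]
      have h2 := h _ _ hpr.1
      simpa using h2
  -- degree bounds
  have hfacdeg : ∀ pr, (fac pr).totalDegree ≤ 1 := by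
    intro pr
    rcases eq_or_ne (ε (eV.symm pr.1) (eV.symm pr.2)) 1 with h | h
    · simp only [hfac]
      rw [if_pos h]
      refine (MvPolynomial.totalDegree_sub _ _).trans ?_
      simp [MvPolynomial.totalDegree_X]
    · simp only [hfac]
      rw [if_neg h]
      refine (MvPolynomial.totalDegree_sub _ _).trans ?_
      refine max_le (by simp [MvPolynomial.totalDegree_X]) ?_
      refine (MvPolynomial.totalDegree_sub _ _).trans ?_
      simp [MvPolynomial.totalDegree_X, MvPolynomial.totalDegree_C]
  have hScard : S.card ≤ m := by
    rw [← hm]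
    apply Finset.card_le_card_of_injOn (fun pr => s(eV.symm pr.1, eV.symm pr.2))
    · intro pr hpr
      simp only [hS, Finset.mem_coe, Finset.mem_filter, Finset.mem_univ, true_and] at hpr
      rw [Finset.mem_coe, SimpleGraph.mem_edgeFinset]
      exact hpr.1
    · intro pr1 h1 pr2 h2 heq
      simp only [hS, Finset.coe_filter, Set.mem_setOf_eq, Finset.mem_univ, true_and] at h1 h2
      rw [Sym2.eq_iff] at heq
      rcases heq with ⟨ha1, hb1⟩ | ⟨ha1, hb1⟩
      · have e1 : pr1.1 = pr2.1 := eV.symm.injective ha1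
        have e2 : pr1.2 = pr2.2 := eV.symm.injective hb1
        exact Prod.ext e1 e2
      · exfalso
        have e1 : pr1.1 = pr2.2 := eV.symm.injective ha1
        have e2 : pr1.2 = pr2.1 := eV.symm.injective hb1
        have l1 := h1.2
        have l2 := h2.2
        rw [e1, e2] at l1
        exact absurd l1 (lt_asymm l2)
  have hPdeg : P.totalDegree ≤ m := by
    calc P.totalDegree ≤ ∑ pr ∈ S, (fac pr).totalDegree :=
          MvPolynomial.totalDegree_finset_prod S fac
      _ ≤ ∑ _pr ∈ S, 1 := Finset.sum_le_sum (fun pr _ => hfacdeg pr)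
      _ = S.card := by simp
      _ ≤ m := hScard
  -- nonvanishing from the given coloring
  obtain ⟨κ₀, hκ₀m, hκ₀c⟩ := hχ
  set f₀ : V → F := fun v => eM ⟨κ₀ v, (hmemM _).mp (hκ₀m v)⟩ with hf₀
  have hf₀P : PF f₀ := hforward κ₀ hκ₀m hκ₀c
  set x₀ : Fin n → F := fun i => f₀ (eV.symm i) with hx₀def
  have hx₀ : MvPolynomial.eval x₀ P ≠ 0 := by
    rw [hiffP]
    have hfe : (fun v => x₀ (eV v)) = f₀ := by
      funext v
      rw [hx₀def]
      simp
    rw [hfe]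
    exact hf₀P
  -- reduction
  set Q := reduceP k P with hQdef
  have hQeval : ∀ x, MvPolynomial.eval x Q = MvPolynomial.eval x P :=
    fun x => eval_reduceP hFq hk2 P x
  have hQ0 : Q ≠ 0 := fun h => hx₀ (by rw [← hQeval x₀, h, map_zero])
  have hQdeg : ∀ i, Q.degreeOf i ≤ k - 1 := degOf_reduceP k hk2 P
  have hQtd : Q.totalDegree ≤ m := (td_reduceP k P).trans hPdeg
  have hrm := rm_bound hFq n Q hQ0 hQdeg m hQtd
  -- counting equalities
  have hcount : (Finset.univ.filter (fun x : Fin n → F => MvPolynomial.eval x Q ≠ 0)).card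
      = Nat.card {f : V → F // PF f} := by
    rw [← Fintype.card_subtype, Nat.card_eq_fintype_card]
    apply Fintype.card_congr
    refine Equiv.subtypeEquiv (Equiv.arrowCongr eV.symm (Equiv.refl F)) ?_
    intro x
    rw [hQeval, hiffP]
    have he : (⇑(Equiv.arrowCongr eV.symm (Equiv.refl F)) x) = fun v => x (eV v) := by
      funext v
      simp [Equiv.arrowCongr]
    rw [he]
  calc (k : ℝ) ^ ((n : ℝ) - (m : ℝ) / ((k : ℝ) - 1))
      ≤ ((Finset.univ.filter (fun x : Fin n → F => MvPolynomial.eval x Q ≠ 0)).card : ℝ) := hrm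
    _ = (Nat.card {f : V → F // PF f} : ℝ) := by exact_mod_cast congrArg Nat.cast hcount
    _ = _ := by rw [← hcongT]
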